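/- Let u_1,…,u_d ∈ ℝⁿ span ℝⁿ and define bounded (hence compact) polyhedra {s : ⟨s,u_k⟩ ≥ λ_k}. Define ũ_k ∈ ℝ^{n+d} for k = 1,…,2d by ũ_k = u_k + e_{n+k} for k ≤ d and ũ_k = -e_{n+k-d} for d < k ≤ 2d (where e_j is the standard basis of ℝ^{n+d} extending ℝⁿ). Then for any constants c_1,…,c_{2d}, the polyhedron {s ∈ ℝ^{n+d} : ⟨s,ũ_k⟩ ≥ c_k, k = 1,…,2d} is bounded. -/

import Mathlib

open Finset

theorem stmt_8 (n d : ℕ) (u : Fin d → Fin n → ℝ)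
    (hspan : Submodule.span ℝ (Set.range u) = (⊤ : Submodule ℝ (Fin n → ℝ)))
    (hbdd : ∀ lam : Fin d → ℝ,
      Bornology.IsBounded {s : Fin n → ℝ | ∀ k, lam k ≤ ∑ j, s j * u k j})
    (ut : Fin d ⊕ Fin d → Fin (n + d) → ℝ)
    (hut1 : ∀ (k : Fin d) (j : Fin (n + d)),
      ut (Sum.inl k) j =
        (if h : (j : ℕ) < n then u k ⟨j, h⟩ else 0) +
        (if (j : ℕ) = n + (k : ℕ) then 1 else 0))
    (hut2 : ∀ (k : Fin d) (j : Fin (n + d)),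
      ut (Sum.inr k) j = if (j : ℕ) = n + (k : ℕ) then -1 else 0) :
    ∀ c : Fin d ⊕ Fin d → ℝ,
      Bornology.IsBounded {s : Fin (n + d) → ℝ | ∀ k, c k ≤ ∑ j, s j * ut k j} := by
  intro c
  obtain ⟨C, hC⟩ := (isBounded_iff_forall_norm_le).1
    (hbdd (fun k => c (Sum.inl k) + c (Sum.inr k)))
  set C' := max C 0 with hC'def
  have hC'0 : 0 ≤ C' := le_max_right _ _
  set M : ℝ := ∑ k : Fin d, ∑ i : Fin n, |u k i| with hMdef
  have hM : 0 ≤ M := Finset.sum_nonneg fun k _ => Finset.sum_nonneg fun i _ => abs_nonneg _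
  set B : ℝ := C' * M + ∑ k : Fin d, (|c (Sum.inl k)| + |c (Sum.inr k)|) with hBdef
  have hB0 : 0 ≤ B := by positivity
  rw [isBounded_iff_forall_norm_le]
  refine ⟨max C' B, fun s hs => ?_⟩
  have key1 : ∀ k : Fin d, ∑ j, s j * ut (Sum.inl k) j
      = (∑ i : Fin n, s (Fin.castAdd d i) * u k i) + s (Fin.natAdd n k) := by
    intro k
    rw [Fin.sum_univ_add]
    congr 1
    · refine Finset.sum_congr rfl fun i _ => ?_
      rw [hut1]
      have h1 : ((Fin.castAdd d i : Fin (n+d)) : ℕ) < n := by simp [i.2]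
      have h2 : ¬ ((Fin.castAdd d i : Fin (n+d)) : ℕ) = n + (k : ℕ) := by
        simp only [Fin.coe_castAdd]
        omega
      rw [dif_pos h1, if_neg h2]
      simp
    · have : ∀ i : Fin d, s (Fin.natAdd n i) * ut (Sum.inl k) (Fin.natAdd n i)
          = if i = k then s (Fin.natAdd n i) else 0 := by
        intro i
        rw [hut1]
        have h1 : ¬ ((Fin.natAdd n i : Fin (n+d)) : ℕ) < n := by simp
        rw [dif_neg h1]
        have h2 : (((Fin.natAdd n i : Fin (n+d)) : ℕ) = n + (k : ℕ)) ↔ i = k := by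
          simp [Fin.ext_iff]
        by_cases h : i = k
        · rw [if_pos (h2.2 h), if_pos h]; simp [h]
        · rw [if_neg (fun hh => h (h2.1 hh)), if_neg h]; simp
      simp_rw [this]
      simp
  have key2 : ∀ k : Fin d, ∑ j, s j * ut (Sum.inr k) j = -(s (Fin.natAdd n k)) := by
    intro k
    rw [Fin.sum_univ_add]
    have hA : ∀ i : Fin n, s (Fin.castAdd d i) * ut (Sum.inr k) (Fin.castAdd d i) = 0 := by
      intro i
      rw [hut2]
      have h2 : ¬ ((Fin.castAdd d i : Fin (n+d)) : ℕ) = n + (k : ℕ) := by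
        simp only [Fin.coe_castAdd]; omega
      rw [if_neg h2, mul_zero]
    have hB' : ∀ i : Fin d, s (Fin.natAdd n i) * ut (Sum.inr k) (Fin.natAdd n i)
        = if i = k then -(s (Fin.natAdd n i)) else 0 := by
      intro i
      rw [hut2]
      have h2 : (((Fin.natAdd n i : Fin (n+d)) : ℕ) = n + (k : ℕ)) ↔ i = k := by
        simp [Fin.ext_iff]
      by_cases h : i = k
      · rw [if_pos (h2.2 h), if_pos h]; ring
      · rw [if_neg (fun hh => h (h2.1 hh)), if_neg h]; ring
    simp_rw [hA, hB']
    simp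
  set s1 : Fin n → ℝ := fun i => s (Fin.castAdd d i) with hs1def
  have hs2le : ∀ k : Fin d, s (Fin.natAdd n k) ≤ -(c (Sum.inr k)) := by
    intro k
    have := hs (Sum.inr k)
    rw [key2 k] at this
    linarith
  have hmem : s1 ∈ {x : Fin n → ℝ | ∀ k, (c (Sum.inl k) + c (Sum.inr k)) ≤ ∑ j, x j * u k j} := by
    intro k
    have h1 := hs (Sum.inl k)
    rw [key1 k] at h1
    have h2 := hs2le k
    show c (Sum.inl k) + c (Sum.inr k) ≤ ∑ j, s (Fin.castAdd d j) * u k j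
    linarith
  have hs1n : ‖s1‖ ≤ C' := le_trans (hC s1 hmem) (le_max_left _ _)
  have habs : ∀ i, |s1 i| ≤ C' := fun i => le_trans (norm_le_pi_norm s1 i) hs1n
  have hsumbound : ∀ k : Fin d, |∑ i, s (Fin.castAdd d i) * u k i| ≤ C' * M := by
    intro k
    show |∑ i, s1 i * u k i| ≤ C' * M
    calc |∑ i, s1 i * u k i| ≤ ∑ i, |s1 i * u k i| := Finset.abs_sum_le_sum_abs _ _
      _ ≤ ∑ i, C' * |u k i| := by
          refine Finset.sum_le_sum fun i _ => ?_
          rw [abs_mul]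
          exact mul_le_mul_of_nonneg_right (habs i) (abs_nonneg _)
      _ = C' * ∑ i, |u k i| := by rw [Finset.mul_sum]
      _ ≤ C' * M := by
          refine mul_le_mul_of_nonneg_left ?_ hC'0
          exact Finset.single_le_sum (f := fun k : Fin d => ∑ i, |u k i|)
            (fun j _ => Finset.sum_nonneg fun i _ => abs_nonneg _) (Finset.mem_univ k)
  have hcB : ∀ k : Fin d, C' * M + |c (Sum.inl k)| + |c (Sum.inr k)| ≤ B := by
    intro k
    have := Finset.single_le_sum
      (f := fun k => |c (Sum.inl k)| + |c (Sum.inr k)|)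
      (fun j _ => by positivity) (Finset.mem_univ k)
    have h2 : 0 ≤ C' * M := mul_nonneg hC'0 hM
    rw [hBdef]; linarith
  rw [pi_norm_le_iff_of_nonneg (le_trans hC'0 (le_max_left _ _))]
  intro j
  induction j using Fin.addCases with
  | left i =>
      calc ‖s (Fin.castAdd d i)‖ = |s1 i| := rfl
        _ ≤ C' := habs i
        _ ≤ max C' B := le_max_left _ _
  | right k =>
      have h1 := hs (Sum.inl k)
      rw [key1 k] at h1
      have h2 := hs2le k
      have h3 := hsumbound k
      have h4 := hcB k
      have h5 : |s (Fin.natAdd n k)| ≤ B := by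
        rw [abs_le]
        constructor
        · have hup : ∑ i, s (Fin.castAdd d i) * u k i ≤ C' * M := (abs_le.1 h3).2
          have hc1 : -|c (Sum.inl k)| ≤ c (Sum.inl k) := neg_abs_le _
          have h7 : 0 ≤ |c (Sum.inr k)| := abs_nonneg _
          linarith
        · have hc2 : -(c (Sum.inr k)) ≤ |c (Sum.inr k)| := neg_le_abs _
          have h6 : 0 ≤ C' * M := mul_nonneg hC'0 hM
          have h7 : 0 ≤ |c (Sum.inl k)| := abs_nonneg _
          linarith
      calc ‖s (Fin.natAdd n k)‖ = |s (Fin.natAdd n k)| := rfl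
        _ ≤ B := h5
        _ ≤ max C' B := le_max_right _ _
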